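/- The entries of a uniformly random permutation vector are negatively associated in pairs: if (X_1,...,X_n) is a uniformly random permutation of the finite set {a_1 < a_2 < ... < a_n} of reals, then for all i ≠ j and all monotone non-decreasing functions f, g : ℝ → ℝ, E[f(X_i)·g(X_j)] ≤ E[f(X_i)]·E[g(X_j)]. -/

import Mathlib

open Finset

private lemma single_fiber_card {n : ℕ} (i : Fin n) (k k' : Fin n) :
    (univ.filter fun σ : Equiv.Perm (Fin n) => σ i = k).card =
      (univ.filter fun σ : Equiv.Perm (Fin n) => σ i = k').card := by
  apply Finset.card_bij' (fun σ _ => Equiv.swap k k' * σ) (fun σ _ => Equiv.swap k k' * σ)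
  · intro σ hσ
    simp only [mem_filter, mem_univ, true_and] at hσ ⊢
    simp [Equiv.Perm.mul_apply, hσ]
  · intro σ hσ
    simp only [mem_filter, mem_univ, true_and] at hσ ⊢
    simp [Equiv.Perm.mul_apply, hσ, Equiv.swap_apply_right]
  · intro σ _
    rw [← mul_assoc, Equiv.swap_mul_self, one_mul]
  · intro σ _
    rw [← mul_assoc, Equiv.swap_mul_self, one_mul]

private lemma pair_fiber_card {n : ℕ} (i j : Fin n) {k l k' l' : Fin n}
    (hkl : k ≠ l) (hkl' : k' ≠ l') :
    (univ.filter fun σ : Equiv.Perm (Fin n) => σ i = k ∧ σ j = l).card =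
      (univ.filter fun σ : Equiv.Perm (Fin n) => σ i = k' ∧ σ j = l').card := by
  obtain ⟨π, hπk, hπl⟩ : ∃ π : Equiv.Perm (Fin n), π k = k' ∧ π l = l' := by
    refine ⟨Equiv.swap (Equiv.swap k k' l) l' * Equiv.swap k k', ?_, ?_⟩
    · simp only [Equiv.Perm.mul_apply, Equiv.swap_apply_left]
      apply Equiv.swap_apply_of_ne_of_ne
      · intro h
        have := congrArg (Equiv.swap k k') h
        simp [Equiv.swap_apply_right] at this
        first | exact hkl this | exact hkl this.symm
      · first | exact hkl' | exact hkl'.symm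
    · simp only [Equiv.Perm.mul_apply, Equiv.swap_apply_left]
  apply Finset.card_bij' (fun σ _ => π * σ) (fun σ _ => π⁻¹ * σ)
  · intro σ hσ
    simp only [mem_filter, mem_univ, true_and] at hσ ⊢
    simp [Equiv.Perm.mul_apply, hσ.1, hσ.2, hπk, hπl]
  · intro σ hσ
    simp only [mem_filter, mem_univ, true_and] at hσ ⊢
    constructor
    · rw [Equiv.Perm.mul_apply, hσ.1, ← hπk]; exact π.symm_apply_apply k
    · rw [Equiv.Perm.mul_apply, hσ.2, ← hπl]; exact π.symm_apply_apply l
  · intro σ _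
    rw [← mul_assoc, inv_mul_cancel, one_mul]
  · intro σ _
    rw [← mul_assoc, mul_inv_cancel, one_mul]

/-- The entries of a uniformly random permutation of distinct reals
`a 0 < a 1 < ... < a (n-1)` are pairwise negatively associated: for distinct
positions `i ≠ j` and monotone non-decreasing `f, g : ℝ → ℝ`,
`E[f(X_i)·g(X_j)] ≤ E[f(X_i)]·E[g(X_j)]`, where `X_i = a (σ i)` for a
uniformly random permutation `σ`. -/
theorem perm_pairwise_neg_assoc {n : ℕ} (a : Fin n → ℝ) (ha : StrictMono a)
    (i j : Fin n) (hij : i ≠ j) (f g : ℝ → ℝ)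
    (hf : Monotone f) (hg : Monotone g) :
    (∑ σ : Equiv.Perm (Fin n),
        (1 / (Nat.factorial n : ℝ)) * (f (a (σ i)) * g (a (σ j)))) ≤
      (∑ σ : Equiv.Perm (Fin n),
          (1 / (Nat.factorial n : ℝ)) * f (a (σ i))) *
        (∑ σ : Equiv.Perm (Fin n),
            (1 / (Nat.factorial n : ℝ)) * g (a (σ j))) := by
  have hn2 : 2 ≤ n := by
    by_contra h
    push_neg at h
    interval_cases n
    · exact absurd i.2 (by simp)
    · exact hij (Subsingleton.elim i j)
  set F : Fin n → ℝ := fun k => f (a k) with hF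
  set G : Fin n → ℝ := fun k => g (a k) with hG
  have hFmono : Monotone F := hf.comp ha.monotone
  have hGmono : Monotone G := hg.comp ha.monotone
  -- Chebyshev
  have hcheb : (∑ k, F k) * (∑ k, G k) ≤ (n : ℝ) * ∑ k, F k * G k := by
    simpa using (hFmono.monovary hGmono).sum_mul_sum_le_card_mul_sum
  -- single fiber card
  set c : ℕ := (univ.filter fun σ : Equiv.Perm (Fin n) => σ i = i).card with hc
  have hcard_i : ∀ k : Fin n,
      (univ.filter fun σ : Equiv.Perm (Fin n) => σ i = k).card = c :=
    fun k => single_fiber_card i k i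
  have hcard_j : ∀ k : Fin n,
      (univ.filter fun σ : Equiv.Perm (Fin n) => σ j = k).card = c := by
    intro k
    rw [single_fiber_card j k j]
    -- fiber of j at j equals fiber of i at i: both equal by symmetry; use total count instead
    have h1 : (univ : Finset (Equiv.Perm (Fin n))).card
        = ∑ k : Fin n, (univ.filter fun σ : Equiv.Perm (Fin n) => σ j = k).card :=
      Finset.card_eq_sum_card_fiberwise (fun σ _ => mem_univ _)
    have h2 : (univ : Finset (Equiv.Perm (Fin n))).card
        = ∑ k : Fin n, (univ.filter fun σ : Equiv.Perm (Fin n) => σ i = k).card :=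
      Finset.card_eq_sum_card_fiberwise (fun σ _ => mem_univ _)
    have h1' : (univ : Finset (Equiv.Perm (Fin n))).card
        = n * (univ.filter fun σ : Equiv.Perm (Fin n) => σ j = j).card := by
      rw [h1]
      rw [Finset.sum_congr rfl (fun k _ => single_fiber_card j k j)]
      simp [mul_comm]
    have h2' : (univ : Finset (Equiv.Perm (Fin n))).card = n * c := by
      rw [h2, Finset.sum_congr rfl (fun k _ => hcard_i k)]
      simp [mul_comm]
    have hn0 : 0 < n := by omega
    exact Nat.eq_of_mul_eq_mul_left hn0 (h1'.symm.trans h2')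
  have hc_tot : c * n = n.factorial := by
    have h2 : (univ : Finset (Equiv.Perm (Fin n))).card
        = ∑ k : Fin n, (univ.filter fun σ : Equiv.Perm (Fin n) => σ i = k).card :=
      Finset.card_eq_sum_card_fiberwise (fun σ _ => mem_univ _)
    rw [Finset.sum_congr rfl (fun k _ => hcard_i k), sum_const, smul_eq_mul] at h2
    simp only [Finset.card_univ, Fintype.card_perm, Fintype.card_fin] at h2
    rw [mul_comm]
    exact h2.symm
  -- pair fiber card
  obtain ⟨k₀, l₀, hk₀l₀⟩ : ∃ k l : Fin n, k ≠ l := by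
    refine ⟨⟨0, by omega⟩, ⟨1, by omega⟩, ?_⟩
    simp [Fin.ext_iff]
  set d : ℕ := (univ.filter fun σ : Equiv.Perm (Fin n) => σ i = k₀ ∧ σ j = l₀).card with hd
  have hcard_p : ∀ p : Fin n × Fin n, p ∈ (univ : Finset (Fin n)).offDiag →
      (univ.filter fun σ : Equiv.Perm (Fin n) => σ i = p.1 ∧ σ j = p.2).card = d := by
    intro p hp
    rw [Finset.mem_offDiag] at hp
    exact pair_fiber_card i j hp.2.2 hk₀l₀
  have hd_tot : d * (n * n - n) = n.factorial := by
    have h2 : (univ : Finset (Equiv.Perm (Fin n))).card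
        = ∑ p ∈ (univ : Finset (Fin n)).offDiag,
            (univ.filter fun σ : Equiv.Perm (Fin n) => (σ i, σ j) = p).card := by
      apply Finset.card_eq_sum_card_fiberwise
      intro σ _
      rw [Finset.mem_coe, Finset.mem_offDiag]
      exact ⟨mem_univ _, mem_univ _, fun h => hij (σ.injective h)⟩
    have h3 : ∀ p ∈ (univ : Finset (Fin n)).offDiag,
        (univ.filter fun σ : Equiv.Perm (Fin n) => (σ i, σ j) = p).card = d := by
      intro p hp
      rw [← hcard_p p hp]
      congr 1
      ext σ
      simp [Prod.ext_iff]
    rw [Finset.sum_congr rfl h3, sum_const, smul_eq_mul, Finset.offDiag_card] at h2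
    simp only [Finset.card_univ, Fintype.card_perm, Fintype.card_fin] at h2
    rw [mul_comm]
    exact h2.symm
  -- rewrite the three sums
  have hsum_i : (∑ σ : Equiv.Perm (Fin n), f (a (σ i))) = (c : ℝ) * ∑ k, F k := by
    rw [← Finset.sum_fiberwise_of_maps_to' (t := (univ : Finset (Fin n)))
        (g := fun σ : Equiv.Perm (Fin n) => σ i) (fun σ _ => mem_univ _) F]
    rw [Finset.mul_sum]
    refine Finset.sum_congr rfl fun k _ => ?_
    rw [Finset.sum_const, hcard_i k, nsmul_eq_mul]
  have hsum_j : (∑ σ : Equiv.Perm (Fin n), g (a (σ j))) = (c : ℝ) * ∑ k, G k := by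
    rw [← Finset.sum_fiberwise_of_maps_to' (t := (univ : Finset (Fin n)))
        (g := fun σ : Equiv.Perm (Fin n) => σ j) (fun σ _ => mem_univ _) G]
    rw [Finset.mul_sum]
    refine Finset.sum_congr rfl fun k _ => ?_
    rw [Finset.sum_const, hcard_j k, nsmul_eq_mul]
  have hsum_p : (∑ σ : Equiv.Perm (Fin n), f (a (σ i)) * g (a (σ j)))
      = (d : ℝ) * ((∑ k, F k) * (∑ k, G k) - ∑ k, F k * G k) := by
    have hmaps : ∀ σ : Equiv.Perm (Fin n), σ ∈ (univ : Finset (Equiv.Perm (Fin n))) →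
        (σ i, σ j) ∈ (univ : Finset (Fin n)).offDiag := by
      intro σ _
      rw [Finset.mem_offDiag]
      exact ⟨mem_univ _, mem_univ _, fun h => hij (σ.injective h)⟩
    rw [← Finset.sum_fiberwise_of_maps_to' (t := (univ : Finset (Fin n)).offDiag)
        (g := fun σ : Equiv.Perm (Fin n) => (σ i, σ j)) hmaps (fun p => F p.1 * G p.2)]
    have hstep : ∀ p ∈ (univ : Finset (Fin n)).offDiag,
        (∑ σ ∈ univ.filter fun σ : Equiv.Perm (Fin n) => (σ i, σ j) = p,
          F p.1 * G p.2) = (d : ℝ) * (F p.1 * G p.2) := by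
      intro p hp
      rw [Finset.sum_const, nsmul_eq_mul]
      congr 2
      rw [← hcard_p p hp]
      congr 1
      ext σ
      simp [Prod.ext_iff]
    rw [Finset.sum_congr rfl hstep, ← Finset.mul_sum]
    congr 1
    have hsplit : (∑ p ∈ (univ : Finset (Fin n)) ×ˢ univ, F p.1 * G p.2)
        = (∑ p ∈ (univ : Finset (Fin n)).diag, F p.1 * G p.2)
          + ∑ p ∈ (univ : Finset (Fin n)).offDiag, F p.1 * G p.2 := by
      rw [← Finset.diag_union_offDiag, Finset.sum_union (Finset.disjoint_diag_offDiag _)]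
    have hprod : (∑ p ∈ (univ : Finset (Fin n)) ×ˢ univ, F p.1 * G p.2)
        = (∑ k, F k) * (∑ k, G k) := by
      rw [Finset.sum_product, Finset.sum_mul_sum]
    have hdiag : (∑ p ∈ (univ : Finset (Fin n)).diag, F p.1 * G p.2)
        = ∑ k, F k * G k := by
      rw [Finset.sum_diag]
    linarith
  -- finish
  rw [← Finset.mul_sum, ← Finset.mul_sum, ← Finset.mul_sum, hsum_i, hsum_j, hsum_p]
  have hN : (0 : ℝ) < (n.factorial : ℝ) := by positivity
  have hC : (c : ℝ) * n = (n.factorial : ℝ) := by exact_mod_cast hc_tot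
  have hD : (d : ℝ) * ((n : ℝ) * n - n) = (n.factorial : ℝ) := by
    have : ((n * n - n : ℕ) : ℝ) = (n : ℝ) * n - n := by
      have : n ≤ n * n := Nat.le_mul_of_pos_left n (by omega)
      push_cast [Nat.cast_sub this]
      ring
    rw [← this]
    exact_mod_cast hd_tot
  have hc0 : (0 : ℝ) < c := by
    rcases Nat.eq_zero_or_pos c with h | h
    · exfalso; have := hc_tot; rw [h] at this; simp at this
      exact Nat.factorial_ne_zero n this.symm
    · exact_mod_cast h
  have hd0 : (0 : ℝ) < d := by
    rcases Nat.eq_zero_or_pos d with h | h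
    · exfalso; have := hd_tot; rw [h] at this; simp at this
      exact Nat.factorial_ne_zero n this.symm
    · exact_mod_cast h
  have hn0 : (0 : ℝ) < n := by exact_mod_cast (by omega : 0 < n)
  have hn1 : (1 : ℝ) ≤ (n : ℝ) - 1 := by
    have : (2 : ℝ) ≤ n := by exact_mod_cast hn2
    linarith
  set SF := ∑ k, F k
  set SG := ∑ k, G k
  set T := ∑ k, F k * G k
  have hNinv : (0 : ℝ) < 1 / (n.factorial : ℝ) := by positivity
  have hdn : (d : ℝ) * ((n : ℝ) - 1) = (c : ℝ) := by
    have he : (d : ℝ) * ((n : ℝ) - 1) * (n : ℝ) = (c : ℝ) * (n : ℝ) := by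
      rw [hC, ← hD]; ring
    exact mul_right_cancel₀ (ne_of_gt hn0) he
  have h1 : (SF * SG - T) * (n : ℝ) ≤ ((n : ℝ) - 1) * (SF * SG) := by
    nlinarith [hcheb]
  have final : (d : ℝ) * (SF * SG - T) * (n.factorial : ℝ)
      ≤ ((c : ℝ) * SF) * ((c : ℝ) * SG) := by
    rw [← hC, ← hdn]
    have h2 := mul_le_mul_of_nonneg_left h1
      (by nlinarith [hd0, hn1] : (0:ℝ) ≤ (d:ℝ) * (d:ℝ) * ((n:ℝ) - 1))
    nlinarith [h2]
  have hpos : (0:ℝ) < (n.factorial : ℝ) * (n.factorial : ℝ) := by positivity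
  calc (1 / (n.factorial : ℝ)) * ((d : ℝ) * (SF * SG - T))
      = ((d : ℝ) * (SF * SG - T) * (n.factorial : ℝ))
          / ((n.factorial : ℝ) * (n.factorial : ℝ)) := by
        field_simp
    _ ≤ (((c : ℝ) * SF) * ((c : ℝ) * SG))
          / ((n.factorial : ℝ) * (n.factorial : ℝ)) := by
        rw [div_le_div_iff₀ hpos hpos]
        exact mul_le_mul_of_nonneg_right final (le_of_lt hpos)
    _ = (1 / (n.factorial : ℝ) * ((c : ℝ) * SF))
          * (1 / (n.factorial : ℝ) * ((c : ℝ) * SG)) := by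
        field_simp
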